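/- Let m, n be coprime integers and set a = m(2n − m), b = n(2m − n), c = m² − mn + n². Then gcd(a, b, c) = 3 if 3 divides m + n, and gcd(a, b, c) = 1 if 3 does not divide m + n. -/

import Mathlib

theorem stmt_3 (m n : ℤ) (hmn : Int.gcd m n = 1)
    (a b c : ℤ) (ha : a = m * (2 * n - m)) (hb : b = n * (2 * m - n))
    (hc : c = m ^ 2 - m * n + n ^ 2) :
    ((3 : ℤ) ∣ m + n → Int.gcd a (Int.gcd b c) = 3) ∧
    (¬ (3 : ℤ) ∣ m + n → Int.gcd a (Int.gcd b c) = 1) := by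
  have hco : IsCoprime m n := Int.isCoprime_iff_gcd_eq_one.mpr hmn
  obtain ⟨u, v, huv⟩ := hco
  set d : ℕ := Int.gcd a (Int.gcd b c) with hd
  have hda : (d : ℤ) ∣ a := Int.gcd_dvd_left _ _
  have hdbc : (d : ℤ) ∣ (Int.gcd b c : ℤ) := Int.gcd_dvd_right _ _
  have hdb : (d : ℤ) ∣ b := hdbc.trans (Int.gcd_dvd_left _ _)
  have hdc : (d : ℤ) ∣ c := hdbc.trans (Int.gcd_dvd_right _ _)
  have h3m2 : (d : ℤ) ∣ 3 * m ^ 2 := by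
    have h := dvd_sub ((dvd_add hdc hdb).mul_left 3) (dvd_add (dvd_add hda hdb) hdc)
    have e : 3 * (c + b) - (a + b + c) = 3 * m ^ 2 := by subst ha hb hc; ring
    rwa [e] at h
  have h3n2 : (d : ℤ) ∣ 3 * n ^ 2 := by
    have h := dvd_sub ((dvd_add hdc hda).mul_left 3) (dvd_add (dvd_add hda hdb) hdc)
    have e : 3 * (c + a) - (a + b + c) = 3 * n ^ 2 := by subst ha hb hc; ring
    rwa [e] at h
  have h3mn : (d : ℤ) ∣ 3 * (m * n) := by
    have h := dvd_add (dvd_add hda hdb) hdc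
    have e : a + b + c = 3 * (m * n) := by subst ha hb hc; ring
    rwa [e] at h
  have hd3 : (d : ℤ) ∣ 3 := by
    have e : (3 : ℤ) = u ^ 2 * (3 * m ^ 2) + (2 * u * v) * (3 * (m * n))
        + v ^ 2 * (3 * n ^ 2) := by
      linear_combination (-3 * (u * m + v * n + 1)) * huv
    rw [e]
    exact dvd_add (dvd_add (h3m2.mul_left _) (h3mn.mul_left _)) (h3n2.mul_left _)
  have hd3n : d ∣ 3 := by exact_mod_cast hd3
  constructor
  · intro h3
    obtain ⟨t, ht⟩ := h3
    have h3a : (3 : ℤ) ∣ a := ⟨m * n - m * t, by rw [ha]; linear_combination (-m) * ht⟩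
    have h3b : (3 : ℤ) ∣ b := ⟨m * n - n * t, by rw [hb]; linear_combination (-n) * ht⟩
    have h3c : (3 : ℤ) ∣ c := ⟨3 * t ^ 2 - m * n, by rw [hc]; linear_combination (m + n + 3 * t) * ht⟩
    have h3d : (3 : ℤ) ∣ (d : ℤ) := Int.dvd_coe_gcd h3a (Int.dvd_coe_gcd h3b h3c)
    have : (3 : ℕ) ∣ d := by exact_mod_cast h3d
    exact Nat.dvd_antisymm hd3n this
  · intro h3
    rcases (Nat.prime_three.eq_one_or_self_of_dvd d hd3n) with h | h
    · exact h
    · exfalso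
      have h3c : (3 : ℤ) ∣ c := by rw [h] at hdc; exact_mod_cast hdc
      have h3sq : (3 : ℤ) ∣ (m + n) ^ 2 := by
        have : (m + n) ^ 2 = c + 3 * (m * n) := by rw [hc]; ring
        rw [this]
        exact dvd_add h3c ⟨m * n, rfl⟩
      exact h3 (Int.prime_three.dvd_of_dvd_pow h3sq)
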